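/- Let n ≥ 2 and let R = ℂ[x₁,…,xₙ,y₁,…,yₙ]/(y_i² − x_i³ + x_i : 1 ≤ i ≤ n), an integral domain with fraction field L. For 1 ≤ k ≤ n−1 let σ_k be the ℂ-algebra automorphism of L induced by x_k ↦ −x_k, y_k ↦ i·y_k, xₙ ↦ −xₙ, yₙ ↦ i·yₙ (i ∈ ℂ a primitive 4-th root of unity), fixing x_j, y_j for j ∉ {k,n}. Then the fixed field L^{⟨σ₁,…,σ_{n−1}⟩} is generated over ℂ by the n + 1 elements x₁², x₂², …, xₙ² and z₂ = y₁y₂⋯y_{n−1}·yₙ^{−1}; that is, L^{⟨σ₁,…,σ_{n−1}⟩} = ℂ(x₁²,…,xₙ²,z₂) as subfields of L. -/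

import Mathlib

set_option synthInstance.maxHeartbeats 1000000
set_option maxHeartbeats 1000000

open MvPolynomial

/-- The coordinate ring `R = ℂ[x₁,…,xₙ,y₁,…,yₙ]/(yᵢ² - xᵢ³ + xᵢ : 1 ≤ i ≤ n)` of the product
of the `n` curves `yᵢ² = xᵢ³ - xᵢ`.  The variable `Sum.inl i` is `xᵢ` and `Sum.inr i` is
`yᵢ`. -/
noncomputable abbrev quarticRing (n : ℕ) : Type :=
  MvPolynomial (Fin n ⊕ Fin n) ℂ ⧸
    Ideal.span (Set.range fun i : Fin n =>
      (X (Sum.inr i) : MvPolynomial (Fin n ⊕ Fin n) ℂ) ^ 2 - X (Sum.inl i) ^ 3 + X (Sum.inl i))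

/-- The class of `xᵢ` in the fraction field `L` of `R`. -/
noncomputable def xg (n : ℕ) (i : Fin n) : FractionRing (quarticRing n) :=
  algebraMap (quarticRing n) _ (Ideal.Quotient.mk _ (X (Sum.inl i)))

/-- The class of `yᵢ` in the fraction field `L` of `R`. -/
noncomputable def yg (n : ℕ) (i : Fin n) : FractionRing (quarticRing n) :=
  algebraMap (quarticRing n) _ (Ideal.Quotient.mk _ (X (Sum.inr i)))

lemma hp_pow {L : Type*} [CommSemiring L] [Algebra ℂ L] (f : L ≃ₐ[ℂ] L) (M : L) (c : ℂ)
    (h : f M = algebraMap ℂ L c * M) (m : ℕ) :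
    (f ^ m) M = algebraMap ℂ L (c ^ m) * M := by
  induction m with
  | zero => simp
  | succ m ih =>
    rw [pow_succ, AlgEquiv.mul_apply, h, map_mul, AlgEquiv.commutes, ih, pow_succ, map_mul]
    ring

lemma hp_list_prod {L : Type*} [CommSemiring L] [Algebra ℂ L] {ιt : Type*} (l : List ιt)
    (f : ιt → (L ≃ₐ[ℂ] L)) (c : ιt → ℂ) (M : L)
    (h : ∀ k ∈ l, f k M = algebraMap ℂ L (c k) * M) :
    (l.map f).prod M = algebraMap ℂ L (l.map c).prod * M := by
  induction l with
  | nil => simp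
  | cons a l ih =>
    rw [List.map_cons, List.prod_cons, AlgEquiv.mul_apply,
      ih (fun k hk => h k (List.mem_cons_of_mem a hk)), map_mul, AlgEquiv.commutes,
      h a List.mem_cons_self, List.map_cons, List.prod_cons, map_mul]
    ring

lemma sum4 (z : ℂ) (h4 : z ^ 4 = 1) (h1 : z ≠ 1) : ∑ j : Fin 4, z ^ (j : ℕ) = 0 := by
  rw [Fin.sum_univ_eq_sum_range (fun i => z ^ i) 4, geom_sum_eq h1 4, h4, sub_self, zero_div]


set_option maxHeartbeats 0 in
/-- the fixed field of `L = Frac(R)` under the `ℂ`-algebra automorphisms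
`σ₁, …, σ_{n-1}` (where `σₖ` sends `xₖ ↦ -xₖ`, `yₖ ↦ i·yₖ`, `xₙ ↦ -xₙ`, `yₙ ↦ i·yₙ` for a
primitive 4th root of unity `i ∈ ℂ` and fixes the other variables) is generated over `ℂ`
by `x₁², …, xₙ²` and `z₂ = y₁y₂⋯y_{n-1}·yₙ⁻¹`; that is, it equals the subfield
`ℂ(x₁²,…,xₙ²,z₂)` of `L`. -/
theorem stmt_14 (n : ℕ) (hn : 2 ≤ n) [IsDomain (quarticRing n)]
    (ι : ℂ) (hι : IsPrimitiveRoot ι 4)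
    (σ : Fin (n - 1) → (FractionRing (quarticRing n) ≃ₐ[ℂ] FractionRing (quarticRing n)))
    (hσxk : ∀ k : Fin (n - 1),
      σ k (xg n (Fin.castLE (Nat.sub_le n 1) k)) = -xg n (Fin.castLE (Nat.sub_le n 1) k))
    (hσyk : ∀ k : Fin (n - 1),
      σ k (yg n (Fin.castLE (Nat.sub_le n 1) k)) =
        algebraMap ℂ (FractionRing (quarticRing n)) ι * yg n (Fin.castLE (Nat.sub_le n 1) k))
    (hσxn : ∀ k : Fin (n - 1), σ k (xg n ⟨n - 1, by omega⟩) = -xg n ⟨n - 1, by omega⟩)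
    (hσyn : ∀ k : Fin (n - 1),
      σ k (yg n ⟨n - 1, by omega⟩) =
        algebraMap ℂ (FractionRing (quarticRing n)) ι * yg n ⟨n - 1, by omega⟩)
    (hσxj : ∀ (k : Fin (n - 1)) (j : Fin n),
      j ≠ Fin.castLE (Nat.sub_le n 1) k → j ≠ ⟨n - 1, by omega⟩ → σ k (xg n j) = xg n j)
    (hσyj : ∀ (k : Fin (n - 1)) (j : Fin n),
      j ≠ Fin.castLE (Nat.sub_le n 1) k → j ≠ ⟨n - 1, by omega⟩ → σ k (yg n j) = yg n j) :
    {f : FractionRing (quarticRing n) | ∀ k, σ k f = f} =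
      ↑(Subfield.closure
        (Set.range (algebraMap ℂ (FractionRing (quarticRing n))) ∪
         Set.range (fun i : Fin n => xg n i ^ 2) ∪
         {(∏ i ∈ Finset.univ.erase (⟨n - 1, by omega⟩ : Fin n), yg n i) *
            (yg n ⟨n - 1, by omega⟩)⁻¹})) := by

  classical
  set L := FractionRing (quarticRing n) with hL
  set g : Fin n ⊕ Fin n → L := Sum.elim (xg n) (yg n) with hg
  set A : Subalgebra ℂ L := Algebra.adjoin ℂ (Set.range g) with hA
  set I : Ideal (MvPolynomial (Fin n ⊕ Fin n) ℂ) := Ideal.span (Set.range fun i : Fin n =>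
      (X (Sum.inr i) : MvPolynomial (Fin n ⊕ Fin n) ℂ) ^ 2 - X (Sum.inl i) ^ 3 + X (Sum.inl i))
    with hI
  -- relation
  have hrel : ∀ i : Fin n, yg n i ^ 2 = xg n i ^ 3 - xg n i := by
    intro i
    have h0 : (Ideal.Quotient.mk I ((X (Sum.inr i) : MvPolynomial (Fin n ⊕ Fin n) ℂ) ^ 2
        - X (Sum.inl i) ^ 3 + X (Sum.inl i))) = 0 := by
      rw [Ideal.Quotient.eq_zero_iff_mem]
      exact Ideal.subset_span ⟨i, rfl⟩
    have h1 := congrArg (algebraMap (quarticRing n) L) h0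
    simp only [map_zero, map_add, map_sub, map_pow] at h1
    have h2 : yg n i ^ 2 - xg n i ^ 3 + xg n i = 0 := h1
    linear_combination h2
  -- membership of ring elements in A
  have hrange : ∀ r : quarticRing n, algebraMap (quarticRing n) L r ∈ A := by
    intro r
    obtain ⟨P, rfl⟩ := Ideal.Quotient.mk_surjective r
    have heq : ((IsScalarTower.toAlgHom ℂ (quarticRing n) L).comp
        (Ideal.Quotient.mkₐ ℂ I)) = aeval g := by
      apply MvPolynomial.algHom_ext
      intro v
      cases v <;>
        simp [g, xg, yg, Ideal.Quotient.mkₐ_eq_mk, IsScalarTower.coe_toAlgHom'] <;> rfl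
    have h2 : algebraMap (quarticRing n) L (Ideal.Quotient.mk I P) = aeval g P := by
      have := congrArg (fun ψ => ψ P) heq
      simpa using this
    rw [h2, hA, Algebra.adjoin_range_eq_range_aeval]
    exact ⟨P, rfl⟩
  -- nonvanishing
  obtain ⟨c6, hc6⟩ : ∃ z : ℂ, z ^ 2 = 6 := IsAlgClosed.exists_pow_nat_eq 6 (by norm_num)
  have hc60 : c6 ≠ 0 := by
    intro h; rw [h] at hc6; norm_num at hc6
  set pt : Fin n ⊕ Fin n → ℂ := Sum.elim (fun _ => (2:ℂ)) (fun _ => c6) with hpt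
  have hnz : ∀ P : MvPolynomial (Fin n ⊕ Fin n) ℂ, eval pt P ≠ 0 →
      algebraMap (quarticRing n) L (Ideal.Quotient.mk I P) ≠ 0 := by
    intro P hP h0
    have h1 : Ideal.Quotient.mk I P = 0 :=
      IsFractionRing.injective (quarticRing n) L (by rw [h0, map_zero])
    rw [Ideal.Quotient.eq_zero_iff_mem] at h1
    have hker : I ≤ RingHom.ker (eval pt) := by
      rw [hI, Ideal.span_le]
      rintro q ⟨i, rfl⟩
      simp only [SetLike.mem_coe, RingHom.mem_ker, map_add, map_sub, map_pow, eval_X]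
      simp [pt, hc6]
      ring
    exact hP (hker h1)
  have hx0 : ∀ i, xg n i ≠ 0 := fun i => hnz _ (by simp [pt])
  have hy0 : ∀ i, yg n i ≠ 0 := fun i => hnz _ (by simp [pt, hc60])
  have hxg_eq : ∀ i, xg n i ^ 2 - 1
      = algebraMap (quarticRing n) L (Ideal.Quotient.mk I (X (Sum.inl i) ^ 2 - 1)) := by
    intro i
    simp only [map_sub, map_pow, map_one]
    rfl
  have ht1 : ∀ i, xg n i ^ 2 - 1 ≠ 0 := by
    intro i
    rw [hxg_eq i]
    exact hnz _ (by simp [pt]; norm_num)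

  set nn : Fin n := ⟨n - 1, by omega⟩ with hnn
  set ck : Fin (n - 1) → Fin n := fun k => Fin.castLE (Nat.sub_le n 1) k with hck
  have hckn : ∀ k, ck k ≠ nn := by
    intro k
    apply Fin.ne_of_val_ne
    simpa [ck, nn] using k.isLt.ne
  have h4 : ι ^ 4 = 1 := hι.pow_eq_one
  have hι2 : ι ^ 2 = -1 := by
    have h2 : ι ^ 2 ≠ 1 := hι.pow_ne_one_of_pos_of_lt (by norm_num) (by norm_num)
    have : (ι ^ 2 - 1) * (ι ^ 2 + 1) = 0 := by linear_combination h4 - 1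
    rcases mul_eq_zero.mp this with h | h
    · exact absurd (by linear_combination h) h2
    · linear_combination h
  set ee : Fin (n-1) → (Fin n ⊕ Fin n) → ℕ := fun k =>
    Sum.elim (fun i => if i = ck k ∨ i = nn then 2 else 0)
             (fun i => if i = ck k ∨ i = nn then 1 else 0) with hee
  have hg_scale : ∀ k v, σ k (g v) = algebraMap ℂ L (ι ^ (ee k v)) * g v := by
    intro k v
    cases v with
    | inl i =>
      show σ k (xg n i) = algebraMap ℂ L (ι ^ (ee k (Sum.inl i))) * xg n i
      by_cases h1 : i = ck k
      · have he : ee k (Sum.inl i) = 2 := by simp [ee, h1]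
        rw [he, hι2, map_neg, map_one, h1, hσxk k]; ring
      · by_cases h2 : i = nn
        · have he : ee k (Sum.inl i) = 2 := by simp [ee, h2]
          rw [he, hι2, map_neg, map_one, h2, hσxn k]; ring
        · have he : ee k (Sum.inl i) = 0 := by simp [ee, h1, h2]
          rw [he, pow_zero, map_one, one_mul]
          exact hσxj k i h1 h2
    | inr i =>
      show σ k (yg n i) = algebraMap ℂ L (ι ^ (ee k (Sum.inr i))) * yg n i
      by_cases h1 : i = ck k
      · have he : ee k (Sum.inr i) = 1 := by simp [ee, h1]
        rw [he, pow_one, h1]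
        exact hσyk k
      · by_cases h2 : i = nn
        · have he : ee k (Sum.inr i) = 1 := by simp [ee, h2]
          rw [he, pow_one, h2]
          exact hσyn k
        · have he : ee k (Sum.inr i) = 0 := by simp [ee, h1, h2]
          rw [he, pow_zero, map_one, one_mul]
          exact hσyj k i h1 h2
  have hAstab : ∀ k, ∀ a ∈ A, σ k a ∈ A := by
    intro k a ha
    have : A.map (σ k).toAlgHom ≤ A := by
      rw [hA, AlgHom.map_adjoin]
      apply Algebra.adjoin_le
      rintro x ⟨y, ⟨v, rfl⟩, rfl⟩
      change (σ k) (g v) ∈ _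
      rw [hg_scale k v]
      exact Subalgebra.mul_mem _ (Subalgebra.algebraMap_mem _ _)
        (Algebra.subset_adjoin ⟨v, rfl⟩)
    exact this ⟨a, ha, rfl⟩
  have hcomm : ∀ j k, ∀ a ∈ A, σ j (σ k a) = σ k (σ j a) := by
    intro j k a ha
    have : A ≤ AlgHom.equalizer ((σ j).toAlgHom.comp (σ k).toAlgHom)
        ((σ k).toAlgHom.comp (σ j).toAlgHom) := by
      rw [hA]
      apply Algebra.adjoin_le
      rintro x ⟨v, rfl⟩
      show σ j (σ k (g v)) = σ k (σ j (g v))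
      rw [hg_scale k v, hg_scale j v, map_mul, map_mul, AlgEquiv.commutes,
        AlgEquiv.commutes, hg_scale j v, hg_scale k v]
      ring
    exact this ha
  have hord : ∀ k, ∀ a ∈ A, σ k (σ k (σ k (σ k a))) = a := by
    intro k a ha
    have : A ≤ AlgHom.equalizer
        (((σ k).toAlgHom.comp (σ k).toAlgHom).comp ((σ k).toAlgHom.comp (σ k).toAlgHom))
        (AlgHom.id ℂ L) := by
      rw [hA]
      apply Algebra.adjoin_le
      rintro x ⟨v, rfl⟩
      show σ k (σ k (σ k (σ k (g v)))) = g v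
      have hmul : ∀ (c : ℂ) (a : L), σ k (algebraMap ℂ L c * a)
          = algebraMap ℂ L c * σ k a := fun c a => by rw [map_mul, AlgEquiv.commutes]
      have h1 := hg_scale k v
      have h2 : σ k (σ k (g v)) = algebraMap ℂ L (ι ^ ee k v * ι ^ ee k v) * g v := by
        rw [h1, hmul, h1]; simp only [map_mul]; ring
      have h3 : σ k (σ k (σ k (σ k (g v)))) =
          algebraMap ℂ L (ι ^ ee k v * ι ^ ee k v * (ι ^ ee k v * ι ^ ee k v)) * g v := by
        rw [h2, hmul, hmul, h2]; simp only [map_mul]; ring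
      rw [h3]
      have h5 : ι ^ ee k v * ι ^ ee k v * (ι ^ ee k v * ι ^ ee k v) = (ι ^ 4) ^ ee k v := by
        ring
      rw [h5, h4, one_pow, map_one, one_mul]
    exact this ha
  -- the subfield K
  set z2 : L := (∏ i ∈ Finset.univ.erase nn, yg n i) * (yg n nn)⁻¹ with hz2def
  set Kf : Subfield L := Subfield.closure
      (Set.range (algebraMap ℂ L) ∪ Set.range (fun i : Fin n => xg n i ^ 2) ∪ {z2}) with hKf
  have hCK : ∀ c : ℂ, algebraMap ℂ L c ∈ Kf :=
    fun c => Subfield.subset_closure (Or.inl (Or.inl ⟨c, rfl⟩))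
  have htK : ∀ i, xg n i ^ 2 ∈ Kf :=
    fun i => Subfield.subset_closure (Or.inl (Or.inr ⟨i, rfl⟩))
  have hzK : z2 ∈ Kf := Subfield.subset_closure (Or.inr rfl)
  have hz2y : ∏ i ∈ Finset.univ.erase nn, yg n i = z2 * yg n nn := by
    rw [hz2def, inv_mul_cancel_right₀ (hy0 nn)]
  have hyy : (∏ i ∈ Finset.univ.erase nn, yg n i) ^ 2
      = (∏ i ∈ Finset.univ.erase nn, xg n i) * (∏ i ∈ Finset.univ.erase nn, (xg n i ^ 2 - 1)) := by
    rw [← Finset.prod_pow, ← Finset.prod_mul_distrib]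
    exact Finset.prod_congr rfl fun i _ => by rw [hrel i]; ring
  have hynn : yg n nn ^ 2 = xg n nn * (xg n nn ^ 2 - 1) := by rw [hrel]; ring
  have e0 : (∏ i ∈ Finset.univ.erase nn, xg n i) * xg n nn = ∏ i, xg n i :=
    Finset.prod_erase_mul Finset.univ _ (Finset.mem_univ nn)
  have e1 : z2 ^ 2 * (yg n nn) ^ 2
      = (∏ i ∈ Finset.univ.erase nn, xg n i) * (∏ i ∈ Finset.univ.erase nn, (xg n i ^ 2 - 1)) := by
    rw [← mul_pow, ← hz2y, hyy]
  have hprod_xg : (∏ i, xg n i) * (∏ i ∈ Finset.univ.erase nn, (xg n i ^ 2 - 1))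
      = z2 ^ 2 * (xg n nn ^ 2) * (xg n nn ^ 2 - 1) := by
    rw [← e0]
    linear_combination (- xg n nn) * e1 + z2 ^ 2 * xg n nn * hynn
  have hXK : (∏ i, xg n i) ∈ Kf := by
    have hQK : (∏ i ∈ Finset.univ.erase nn, (xg n i ^ 2 - 1)) ∈ Kf :=
      Subfield.prod_mem _ fun i _ => sub_mem (htK i) (one_mem _)
    have hQ0 : (∏ i ∈ Finset.univ.erase nn, (xg n i ^ 2 - 1)) ≠ 0 :=
      Finset.prod_ne_zero_iff.mpr fun i _ => ht1 i
    have heq : (∏ i, xg n i)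
        = z2 ^ 2 * (xg n nn ^ 2) * (xg n nn ^ 2 - 1)
          * (∏ i ∈ Finset.univ.erase nn, (xg n i ^ 2 - 1))⁻¹ := by
      rw [eq_mul_inv_iff_mul_eq₀ hQ0]
      exact hprod_xg
    rw [heq]
    exact mul_mem (mul_mem (mul_mem (pow_mem hzK 2) (htK nn))
      (sub_mem (htK nn) (one_mem _))) (inv_mem hQK)
  have hparK : ∀ c : Fin n → ℕ, (∀ i, c i % 2 = c nn % 2) → (∏ i, xg n i ^ c i) ∈ Kf := by
    intro c hc
    rcases Nat.even_or_odd (c nn) with he | ho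
    · have hstep : ∀ i, xg n i ^ c i = (xg n i ^ 2) ^ (c i / 2) := by
        intro i
        rw [← pow_mul]
        congr 1
        have h1 := hc i
        have h2 : c nn % 2 = 0 := Nat.even_iff.mp he
        omega
      rw [Finset.prod_congr rfl fun i _ => hstep i]
      exact Subfield.prod_mem _ fun i _ => pow_mem (htK i) _
    · have hstep : ∀ i, xg n i ^ c i = (xg n i ^ 2) ^ (c i / 2) * xg n i := by
        intro i
        rw [← pow_mul, ← pow_succ]
        congr 1
        have h1 := hc i
        have h2 : c nn % 2 = 1 := Nat.odd_iff.mp ho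
        omega
      rw [Finset.prod_congr rfl fun i _ => hstep i, Finset.prod_mul_distrib]
      exact mul_mem (Subfield.prod_mem _ fun i _ => pow_mem (htK i) _) hXK
  -- surjectivity of ck onto indices ≠ nn
  have hsurj : ∀ i : Fin n, i ≠ nn → ∃ k, ck k = i := by
    intro i hi
    have hvi : (i : ℕ) ≠ n - 1 := fun h => hi (Fin.ext h)
    have hlt : (i : ℕ) < n - 1 := by have := i.isLt; omega
    exact ⟨⟨i, hlt⟩, Fin.ext rfl⟩
  -- the key monomial lemma
  have hMK : ∀ d : (Fin n ⊕ Fin n) → ℕ,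
      (∀ k, 4 ∣ (2 * d (Sum.inl (ck k)) + 2 * d (Sum.inl nn) + d (Sum.inr (ck k)) + d (Sum.inr nn)))
      → (∏ v, g v ^ d v) ∈ Kf := by
    intro d hd
    rw [Fintype.prod_sum_type]
    have hgl : ∀ i, g (Sum.inl i) = xg n i := fun i => rfl
    have hgr : ∀ i, g (Sum.inr i) = yg n i := fun i => rfl
    simp only [hgl, hgr]
    have hb : ∀ i, d (Sum.inr i) % 2 = d (Sum.inr nn) % 2 := by
      intro i
      by_cases hi : i = nn
      · rw [hi]
      · obtain ⟨k, hk⟩ := hsurj i hi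
        have := hd k
        rw [hk] at this
        omega
    rcases Nat.even_or_odd (d (Sum.inr nn)) with he | ho
    · -- all y-exponents even
      have hbe : ∀ i, d (Sum.inr i) % 2 = 0 := by
        intro i
        have h1 := hb i
        have h2 := Nat.even_iff.mp he
        omega
      have hstep : ∀ i, yg n i ^ d (Sum.inr i)
          = xg n i ^ (d (Sum.inr i) / 2) * (xg n i ^ 2 - 1) ^ (d (Sum.inr i) / 2) := by
        intro i
        have h2 : d (Sum.inr i) = 2 * (d (Sum.inr i) / 2) := by have := hbe i; omega
        nth_rewrite 1 [h2]
        rw [pow_mul, hrel i, show xg n i ^ 3 - xg n i = xg n i * (xg n i ^ 2 - 1) from by ring,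
          mul_pow]
      have hcpar : ∀ i, (d (Sum.inl i) + d (Sum.inr i) / 2) % 2
          = (d (Sum.inl nn) + d (Sum.inr nn) / 2) % 2 := by
        intro i
        by_cases hi : i = nn
        · rw [hi]
        · obtain ⟨k, hk⟩ := hsurj i hi
          have h1 := hd k
          rw [hk] at h1
          have h2 := hbe i
          have h3 := hbe nn
          omega
      suffices hS : (∏ i, xg n i ^ (d (Sum.inl i) + d (Sum.inr i) / 2))
          * (∏ i, (xg n i ^ 2 - 1) ^ (d (Sum.inr i) / 2)) ∈ Kf by
        have heq2 : (∏ i, xg n i ^ d (Sum.inl i)) * (∏ i, yg n i ^ d (Sum.inr i))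
            = (∏ i, xg n i ^ (d (Sum.inl i) + d (Sum.inr i) / 2))
              * (∏ i, (xg n i ^ 2 - 1) ^ (d (Sum.inr i) / 2)) := by
          rw [Finset.prod_congr rfl fun i _ => hstep i, Finset.prod_mul_distrib,
            Finset.prod_congr rfl fun i (_ : i ∈ Finset.univ) => pow_add (xg n i) _ _,
            Finset.prod_mul_distrib]
          ring
        rw [heq2]; exact hS
      exact mul_mem (hparK _ hcpar)
        (Subfield.prod_mem _ fun i _ => pow_mem (sub_mem (htK i) (one_mem _)) _)
    · -- all y-exponents odd
      have hbo : ∀ i, d (Sum.inr i) % 2 = 1 := by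
        intro i
        have h1 := hb i
        have h2 := Nat.odd_iff.mp ho
        omega
      have hstep : ∀ i, yg n i ^ d (Sum.inr i)
          = xg n i ^ (d (Sum.inr i) / 2) * (xg n i ^ 2 - 1) ^ (d (Sum.inr i) / 2) * yg n i := by
        intro i
        have h2 : d (Sum.inr i) = 2 * (d (Sum.inr i) / 2) + 1 := by have := hbo i; omega
        nth_rewrite 1 [h2]
        rw [pow_succ, pow_mul, hrel i,
          show xg n i ^ 3 - xg n i = xg n i * (xg n i ^ 2 - 1) from by ring, mul_pow]
      have hprod_y : ∏ i, yg n i = z2 * (xg n nn * (xg n nn ^ 2 - 1)) := by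
        rw [← Finset.prod_erase_mul Finset.univ _ (Finset.mem_univ nn), hz2y, mul_assoc,
          ← pow_two, hynn]
      set c : Fin n → ℕ := fun i => d (Sum.inl i) + d (Sum.inr i) / 2
          + (if i = nn then 1 else 0) with hcdef
      have h3 : ∏ i, xg n i ^ c i
          = ((∏ i, xg n i ^ d (Sum.inl i)) * (∏ i, xg n i ^ (d (Sum.inr i) / 2))) * xg n nn := by
        have hsp : ∀ i ∈ Finset.univ, xg n i ^ c i = xg n i ^ d (Sum.inl i)
            * xg n i ^ (d (Sum.inr i) / 2) * (if i = nn then xg n i else 1) := by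
          intro i _
          rw [hcdef, pow_add, pow_add, pow_ite, pow_one, pow_zero]
        rw [Finset.prod_congr rfl hsp, Finset.prod_mul_distrib, Finset.prod_mul_distrib,
          Finset.prod_ite_eq' Finset.univ nn (xg n), if_pos (Finset.mem_univ nn)]
      have hcpar : ∀ i, c i % 2 = c nn % 2 := by
        intro i
        by_cases hi : i = nn
        · rw [hi]
        · obtain ⟨k, hk⟩ := hsurj i hi
          have h1 := hd k
          rw [hk] at h1
          have h2 := hbo i
          have h3 := hbo nn
          simp only [hcdef, if_neg hi, eq_self_iff_true, if_true]
          omega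
      suffices hS : (∏ i, xg n i ^ c i)
          * ((∏ i, (xg n i ^ 2 - 1) ^ (d (Sum.inr i) / 2)) * z2 * (xg n nn ^ 2 - 1)) ∈ Kf by
        have heq2 : (∏ i, xg n i ^ d (Sum.inl i)) * (∏ i, yg n i ^ d (Sum.inr i))
            = (∏ i, xg n i ^ c i)
              * ((∏ i, (xg n i ^ 2 - 1) ^ (d (Sum.inr i) / 2)) * z2 * (xg n nn ^ 2 - 1)) := by
          rw [Finset.prod_congr rfl fun i _ => hstep i, Finset.prod_mul_distrib,
            Finset.prod_mul_distrib, hprod_y, h3]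
          ring
        rw [heq2]; exact hS
      exact mul_mem (hparK c hcpar)
        (mul_mem (mul_mem (Subfield.prod_mem _ fun i _ =>
          pow_mem (sub_mem (htK i) (one_mem _)) _) hzK) (sub_mem (htK nn) (one_mem _)))
  -- weights and scaling of monomials
  set Md : ((Fin n ⊕ Fin n) → ℕ) → L := fun d => ∏ v, g v ^ d v with hMd
  set w : Fin (n - 1) → ((Fin n ⊕ Fin n) → ℕ) → ℕ := fun k d =>
      2 * d (Sum.inl (ck k)) + 2 * d (Sum.inl nn) + d (Sum.inr (ck k)) + d (Sum.inr nn) with hwdef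
  have hwsum : ∀ k d, (∑ v, ee k v * d v) = w k d := by
    intro k d
    rw [Fintype.sum_sum_type]
    have hl : ∀ i : Fin n, ee k (Sum.inl i) * d (Sum.inl i)
        = (if i = ck k then 2 * d (Sum.inl i) else 0)
          + (if i = nn then 2 * d (Sum.inl i) else 0) := by
      intro i
      by_cases h1 : i = ck k
      · have he : ee k (Sum.inl i) = 2 := by simp [ee, h1]
        rw [he, if_pos h1, if_neg (by rw [h1]; exact hckn k)]
        omega
      · by_cases h2 : i = nn
        · have he : ee k (Sum.inl i) = 2 := by simp [ee, h2]
          rw [he, if_neg h1, if_pos h2]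
          omega
        · have he : ee k (Sum.inl i) = 0 := by simp [ee, h1, h2]
          rw [he, if_neg h1, if_neg h2]
          omega
    have hr : ∀ i : Fin n, ee k (Sum.inr i) * d (Sum.inr i)
        = (if i = ck k then d (Sum.inr i) else 0) + (if i = nn then d (Sum.inr i) else 0) := by
      intro i
      by_cases h1 : i = ck k
      · have he : ee k (Sum.inr i) = 1 := by simp [ee, h1]
        rw [he, if_pos h1, if_neg (by rw [h1]; exact hckn k)]
        omega
      · by_cases h2 : i = nn
        · have he : ee k (Sum.inr i) = 1 := by simp [ee, h2]
          rw [he, if_neg h1, if_pos h2]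
          omega
        · have he : ee k (Sum.inr i) = 0 := by simp [ee, h1, h2]
          rw [he, if_neg h1, if_neg h2]
          omega
    rw [Finset.sum_congr rfl fun i _ => hl i, Finset.sum_congr rfl fun i _ => hr i,
      Finset.sum_add_distrib, Finset.sum_add_distrib,
      Finset.sum_ite_eq' Finset.univ (ck k) (fun i => 2 * d (Sum.inl i)),
      Finset.sum_ite_eq' Finset.univ nn (fun i => 2 * d (Sum.inl i)),
      Finset.sum_ite_eq' Finset.univ (ck k) (fun i => d (Sum.inr i)),
      Finset.sum_ite_eq' Finset.univ nn (fun i => d (Sum.inr i))]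
    simp only [Finset.mem_univ, if_true]
    simp only [hwdef]
    ring
  have hσM : ∀ k d, σ k (Md d) = algebraMap ℂ L (ι ^ w k d) * Md d := by
    intro k d
    have hterm : ∀ v, σ k (g v ^ d v) = algebraMap ℂ L (ι ^ (ee k v * d v)) * g v ^ d v := by
      intro v
      rw [map_pow, hg_scale k v, mul_pow, ← map_pow, ← pow_mul]
    simp only [hMd]
    rw [map_prod, Finset.prod_congr rfl fun v _ => hterm v, Finset.prod_mul_distrib, ← map_prod,
      Finset.prod_pow_eq_pow_sum, hwsum k d]
  set Φ : (Fin (n - 1) → Fin 4) → (L ≃ₐ[ℂ] L) := fun ev =>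
      ((List.finRange (n - 1)).map (fun k => σ k ^ ((ev k : ℕ)))).prod with hΦ
  have hΦM : ∀ ev d, Φ ev (Md d)
      = algebraMap ℂ L (∏ k, (ι ^ w k d) ^ ((ev k : ℕ))) * Md d := by
    intro ev d
    rw [Fin.prod_univ_def]
    simp only [hΦ]
    exact hp_list_prod _ _ _ _ fun k _ => hp_pow (σ k) (Md d) _ (hσM k d) _
  have hΦfix : ∀ ev (u : L), (∀ k, σ k u = u) → Φ ev u = u := by
    intro ev u hu
    have h1 : ∀ (k : Fin (n - 1)) (m : ℕ), (σ k ^ m) u = algebraMap ℂ L ((1 : ℂ) ^ m) * u :=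
      fun k m => hp_pow _ _ _ (by rw [hu k, map_one, one_mul]) m
    have h2 := hp_list_prod (List.finRange (n - 1)) (fun k => σ k ^ ((ev k : ℕ)))
      (fun k => (1 : ℂ) ^ ((ev k : ℕ))) u (fun k _ => h1 k _)
    simp only [hΦ]
    rw [h2]
    simp
  set T : L → L := fun u => ∑ ev : Fin (n - 1) → Fin 4, Φ ev u with hT
  have hTfix : ∀ u : L, (∀ k, σ k u = u) → T u = algebraMap ℂ L ((4 : ℂ) ^ (n - 1)) * u := by
    intro u hu
    simp only [hT]
    rw [Finset.sum_congr rfl fun ev _ => hΦfix ev u hu, Finset.sum_const]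
    have hcard : (Finset.univ : Finset (Fin (n - 1) → Fin 4)).card = 4 ^ (n - 1) := by
      simp [Finset.card_univ]
    rw [hcard, nsmul_eq_mul, show ((4 : ℂ) ^ (n - 1)) = ((4 ^ (n - 1) : ℕ) : ℂ) from by
      push_cast; ring, map_natCast]
  have hTmon : ∀ d : (Fin n ⊕ Fin n) → ℕ, T (Md d) ∈ Kf := by
    intro d
    have hform : T (Md d) = algebraMap ℂ L
        (∑ ev : Fin (n - 1) → Fin 4, ∏ k, (ι ^ w k d) ^ ((ev k : ℕ))) * Md d := by
      simp only [hT]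
      rw [Finset.sum_congr rfl fun ev _ => hΦM ev d, ← Finset.sum_mul, ← map_sum]
    have hchar : (∑ ev : Fin (n - 1) → Fin 4, ∏ k, (ι ^ w k d) ^ ((ev k : ℕ)))
        = ∏ k : Fin (n - 1), ∑ j : Fin 4, (ι ^ w k d) ^ (j : ℕ) := by
      rw [Finset.prod_univ_sum, Fintype.piFinset_univ]
    by_cases hall : ∀ k, 4 ∣ w k d
    · rw [hform]
      refine mul_mem (hCK _) ?_
      have : Md d = ∏ v, g v ^ d v := by simp only [hMd]
      rw [this]
      exact hMK d hall
    · push_neg at hall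
      obtain ⟨k0, hk0⟩ := hall
      have hz4 : (ι ^ w k0 d) ^ 4 = 1 := by rw [← pow_mul, mul_comm, pow_mul, h4, one_pow]
      have hz1 : (ι ^ w k0 d) ≠ 1 := fun hcon => hk0 ((hι.pow_eq_one_iff_dvd _).mp hcon)
      rw [hform, hchar, Finset.prod_eq_zero (Finset.mem_univ k0) (sum4 _ hz4 hz1), map_zero,
        zero_mul]
      exact zero_mem _
  have hTA : ∀ u, u ∈ A → T u ∈ Kf := by
    intro u hu
    rw [hA, Algebra.adjoin_range_eq_range_aeval] at hu
    obtain ⟨P, hP⟩ := hu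
    have hP' : aeval g P = u := hP
    rw [← hP']
    have hexp : aeval g P = ∑ dd ∈ P.support, algebraMap ℂ L (coeff dd P) * Md ⇑dd := by
      rw [aeval_def, eval₂_eq]
      refine Finset.sum_congr rfl fun dd _ => ?_
      congr 1
      simp only [hMd]
      exact Finset.prod_subset (Finset.subset_univ _) (fun v _ hv => by
        rw [Finsupp.notMem_support_iff.mp hv, pow_zero])
    have hTexp : T (aeval g P) = ∑ dd ∈ P.support, algebraMap ℂ L (coeff dd P) * T (Md ⇑dd) := by
      simp only [hT]
      rw [hexp, Finset.sum_congr rfl fun ev (_ : ev ∈ (Finset.univ : Finset (Fin (n-1) → Fin 4)))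
        => (map_sum (Φ ev) _ _), Finset.sum_comm]
      refine Finset.sum_congr rfl fun dd _ => ?_
      rw [Finset.mul_sum]
      exact Finset.sum_congr rfl fun ev _ => by rw [map_mul, AlgEquiv.commutes]
    rw [hTexp]
    exact Subfield.sum_mem _ fun dd _ => mul_mem (hCK _) (hTmon ⇑dd)
  -- forward direction: invariant elements lie in Kf
  have hfwd : ∀ f : L, (∀ k, σ k f = f) → f ∈ Kf := by
    intro f hf
    obtain ⟨p, q, hqmem, hpq⟩ := IsFractionRing.div_surjective (A := quarticRing n) f
    have hqne : q ≠ 0 := nonZeroDivisors.ne_zero hqmem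
    set b : L := algebraMap (quarticRing n) L q with hbdef
    have hq0 : b ≠ 0 := by
      simp only [hbdef]
      intro h
      apply hqne
      apply IsFractionRing.injective (quarticRing n) L
      rw [h, map_zero]
    have hbA : b ∈ A := hrange q
    have hσ0 : ∀ (j : Fin (n - 1)) (x : L), x ≠ 0 → σ j x ≠ 0 := by
      intro j x hx h
      exact hx ((σ j).injective (by rw [h, map_zero]))
    have hnorm : ∀ s : Finset (Fin (n - 1)), ∃ B : L, B ∈ A ∧ B ≠ 0 ∧
        (∃ cB ∈ A, B = b * cB) ∧ ∀ k ∈ s, σ k B = B := by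
      intro s
      induction s using Finset.induction_on with
      | empty =>
        exact ⟨b, hbA, hq0, ⟨1, one_mem A, (mul_one b).symm⟩,
          fun k hk => absurd hk (Finset.notMem_empty k)⟩
      | @insert j s hj ih =>
        obtain ⟨B, hBA, hB0, ⟨cB, hcBA, hBb⟩, hBfix⟩ := ih
        have hA1 : σ j B ∈ A := hAstab j B hBA
        have hA2 : σ j (σ j B) ∈ A := hAstab j _ hA1
        have hA3 : σ j (σ j (σ j B)) ∈ A := hAstab j _ hA2
        refine ⟨B * σ j B * σ j (σ j B) * σ j (σ j (σ j B)),
          mul_mem (mul_mem (mul_mem hBA hA1) hA2) hA3,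
          mul_ne_zero (mul_ne_zero (mul_ne_zero hB0 (hσ0 j _ hB0)) (hσ0 j _ (hσ0 j _ hB0)))
            (hσ0 j _ (hσ0 j _ (hσ0 j _ hB0))),
          ⟨cB * σ j B * σ j (σ j B) * σ j (σ j (σ j B)),
            mul_mem (mul_mem (mul_mem hcBA hA1) hA2) hA3, by rw [hBb]; ring⟩, ?_⟩
        intro k hk
        rcases Finset.mem_insert.mp hk with hk | hk
        · subst hk
          rw [map_mul, map_mul, map_mul, hord k B hBA]
          ring
        · have hc0 : σ k B = B := hBfix k hk
          have hc1 : σ k (σ j B) = σ j B := by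
            rw [← hcomm j k B hBA, hc0]
          have hc2 : σ k (σ j (σ j B)) = σ j (σ j B) := by
            rw [← hcomm j k (σ j B) hA1, hc1]
          have hc3 : σ k (σ j (σ j (σ j B))) = σ j (σ j (σ j B)) := by
            rw [← hcomm j k (σ j (σ j B)) hA2, hc2]
          rw [map_mul, map_mul, map_mul, hc0, hc1, hc2, hc3]
    obtain ⟨B, hBA, hB0, ⟨cB, hcBA, hBb⟩, hBfix⟩ := hnorm Finset.univ
    have hBfix' : ∀ k, σ k B = B := fun k => hBfix k (Finset.mem_univ k)
    have hfB : f * B ∈ A := by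
      have heq : f * B = algebraMap (quarticRing n) L p * cB := by
        rw [hBb, ← hpq]
        simp only [hbdef] at hq0 ⊢
        rw [div_mul_eq_mul_div, div_eq_iff hq0]
        ring
      rw [heq]
      exact mul_mem (hrange p) hcBA
    have hfBfix : ∀ k, σ k (f * B) = f * B := fun k => by rw [map_mul, hf k, hBfix' k]
    have h4ne : algebraMap ℂ L ((4 : ℂ) ^ (n - 1)) ≠ 0 := by
      intro h
      have h2 : ((4 : ℂ) ^ (n - 1)) = 0 := (algebraMap ℂ L).injective (by rw [h, map_zero])
      exact (pow_ne_zero _ (by norm_num : (4 : ℂ) ≠ 0)) h2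
    have hu_mem : f * B ∈ Kf := by
      have h1 : T (f * B) = algebraMap ℂ L ((4 : ℂ) ^ (n - 1)) * (f * B) := hTfix _ hfBfix
      have h2 : T (f * B) ∈ Kf := hTA _ hfB
      rw [h1] at h2
      have h3 := mul_mem (inv_mem (hCK ((4 : ℂ) ^ (n - 1)))) h2
      rwa [inv_mul_cancel_left₀ h4ne] at h3
    have hB_mem : B ∈ Kf := by
      have h1 : T B = algebraMap ℂ L ((4 : ℂ) ^ (n - 1)) * B := hTfix _ hBfix'
      have h2 : T B ∈ Kf := hTA _ hBA
      rw [h1] at h2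
      have h3 := mul_mem (inv_mem (hCK ((4 : ℂ) ^ (n - 1)))) h2
      rwa [inv_mul_cancel_left₀ h4ne] at h3
    have heq : f = (f * B) * B⁻¹ := by rw [mul_assoc, mul_inv_cancel₀ hB0, mul_one]
    rw [heq]
    exact mul_mem hu_mem (inv_mem hB_mem)
  -- reverse direction
  have hιL0 : algebraMap ℂ L ι ≠ 0 := by
    intro h
    have hι0 : ι ≠ 0 := fun h0 => by rw [h0] at h4; norm_num at h4
    exact hι0 ((algebraMap ℂ L).injective (by rw [h, map_zero]))
  have hrev : ∀ f ∈ Kf, ∀ k, σ k f = f := by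
    intro f hfK k
    have heqon : Set.EqOn (((σ k : L ≃+* L) : L →+* L)) (RingHom.id L)
        (Set.range (algebraMap ℂ L) ∪ Set.range (fun i : Fin n => xg n i ^ 2) ∪ {z2}) := by
      rintro x (hx | hx)
      · rcases hx with ⟨c, rfl⟩ | ⟨i, rfl⟩
        · exact (σ k).commutes c
        · show σ k (xg n i ^ 2) = xg n i ^ 2
          have hs : σ k (xg n i) = algebraMap ℂ L (ι ^ ee k (Sum.inl i)) * xg n i :=
            hg_scale k (Sum.inl i)
          rw [map_pow, hs, mul_pow, ← map_pow, ← pow_mul]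
          by_cases hc : i = ck k ∨ i = nn
          · have hv : ee k (Sum.inl i) = 2 := by simp [ee, hc]
            rw [hv, show (2 * 2 : ℕ) = 4 from rfl, h4, map_one, one_mul]
          · have hv : ee k (Sum.inl i) = 0 := by
              push_neg at hc
              simp [ee, hc.1, hc.2]
            rw [hv, zero_mul, pow_zero, map_one, one_mul]
      · rw [Set.mem_singleton_iff] at hx
        subst hx
        show σ k z2 = z2
        have hynk : σ k (yg n nn) = algebraMap ℂ L ι * yg n nn := hσyn k
        have hck_mem : ck k ∈ Finset.univ.erase nn :=
          Finset.mem_erase.mpr ⟨hckn k, Finset.mem_univ _⟩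
        have hterm : ∀ i ∈ Finset.univ.erase nn,
            σ k (yg n i) = (if i = ck k then algebraMap ℂ L ι else 1) * yg n i := by
          intro i hi
          have hne : i ≠ nn := Finset.ne_of_mem_erase hi
          by_cases h1 : i = ck k
          · rw [if_pos h1, h1]
            exact hσyk k
          · rw [if_neg h1, one_mul]
            have hv : ee k (Sum.inr i) = 0 := by simp [ee, h1, hne]
            have hs : σ k (yg n i) = algebraMap ℂ L (ι ^ ee k (Sum.inr i)) * yg n i :=
              hg_scale k (Sum.inr i)
            rwa [hv, pow_zero, map_one, one_mul] at hs
        rw [hz2def, map_mul, map_inv₀, map_prod, Finset.prod_congr rfl hterm,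
          Finset.prod_mul_distrib,
          Finset.prod_ite_eq' (Finset.univ.erase nn) (ck k) (fun _ => algebraMap ℂ L ι),
          if_pos hck_mem, hynk, mul_inv,
          show algebraMap ℂ L ι * (∏ i ∈ Finset.univ.erase nn, yg n i)
              * ((algebraMap ℂ L ι)⁻¹ * (yg n nn)⁻¹)
            = (algebraMap ℂ L ι * (algebraMap ℂ L ι)⁻¹)
              * ((∏ i ∈ Finset.univ.erase nn, yg n i) * (yg n nn)⁻¹) from by ring,
          mul_inv_cancel₀ hιL0, one_mul]
    exact RingHom.eqOn_field_closure heqon hfK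
  apply Set.eq_of_subset_of_subset
  · intro f hf
    exact hfwd f hf
  · intro f hf k
    exact hrev f hf k
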